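/- In the atomic object O(Seq), every reachable state (h, h_s) satisfies that h_s is a linearization of h: there is a history h' obtained from h by appending matching returns for some unmatched calls of h and deleting the remaining unmatched calls, such that h_s is a permutation of h' preserving the order between each return action and each later call action. -/

import Mathlib

/-- Call and return actions, tagged by a method name `M`, argument `x` or
return value `y`, and an invocation identifier `k`. -/
inductive Act : Type
  | call (M x k : ℕ) : Act
  | ret (y k : ℕ) : Act
deriving DecidableEq

def Act.isCall : Act → Prop | .call _ _ _ => True | _ => False
def Act.isRet : Act → Prop | .ret _ _ => True | _ => False
/-- The invocation identifier of an action. -/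
def Act.id : Act → ℕ | .call _ _ k => k | .ret _ k => k

/-- A history is a sequence of call and return actions. -/
abbrev History := List Act

/-- Invocation `k` has a call but no matching return in `h`. -/
def UnmatchedCall (h : History) (k : ℕ) : Prop :=
  (∃ M x, Act.call M x k ∈ h) ∧ ∀ y, Act.ret y k ∉ h

/-- Invocation identifier `k` occurs in `h`. -/
def IdOccurs (k : ℕ) (h : History) : Prop := ∃ a ∈ h, a.id = k

/-- A sequential history: every call is immediately followed by its matching return. -/
inductive IsSequential : History → Prop
  | nil : IsSequential []
  | cons (M x k y : ℕ) {t : History} :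
      IsSequential t → IsSequential (Act.call M x k :: Act.ret y k :: t)

open Classical in
/-- `h'` is obtained from `h` by appending matching returns for the unmatched calls
whose identifiers lie in some set `K`, and deleting the remaining unmatched calls. -/
noncomputable def IsCompletion (h h' : History) : Prop :=
  ∃ (K : Set ℕ) (rets : List Act),
    (∀ k ∈ K, UnmatchedCall h k) ∧
    (∀ a ∈ rets, ∃ y k, a = Act.ret y k ∧ k ∈ K) ∧
    (∀ k ∈ K, ∃ y, Act.ret y k ∈ rets) ∧
    h' = h.filter (fun a => decide (¬ (a.isCall ∧ UnmatchedCall h a.id ∧ a.id ∉ K))) ++ rets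

/-- Some occurrence of `a` precedes some occurrence of `b` in `h`. -/
def Precedes (h : History) (a b : Act) : Prop :=
  ∃ i j : ℕ, i < j ∧ h[i]? = some a ∧ h[j]? = some b

/-- `hs` is a linearization of `h` (`h ⊑ hs`): some completion `h'` of `h`
is a permutation of `hs` that preserves the order between return actions
and later call actions. -/
def Linearizes (h hs : History) : Prop :=
  ∃ h', IsCompletion h h' ∧ h'.Perm hs ∧
    ∀ r c, r.isRet → c.isCall → Precedes h' r c → Precedes hs r c

/-- A labeled transition system with an initial state. -/
structure LTS (S L : Type*) where
  init : S
  tr : S → L → S → Prop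

/-- Labels of the atomic object: call/return actions, or linearization points. -/
inductive ALabel : Type
  | act (a : Act)
  | lin (k : ℕ)

/-- Observable labels are the call and return actions. -/
def ALabel.isObs : ALabel → Prop | .act _ => True | .lin _ => False

/-- Transition relation of the atomic object `O(Seq)`: a call action appends a fresh
call to the history; a return action appends a return to the history provided it is
pending and occurs in the linearization; a linearization point extends the
linearization with a completed pending invocation, staying within `Seq`. -/
def AtomicTr (Seq : Set History) :
    History × History → ALabel → History × History → Prop :=
  fun st l st' =>
    match l with
    | .act (.call M x k) =>
        ¬ IdOccurs k st.1 ∧ st' = (st.1 ++ [Act.call M x k], st.2)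
    | .act (.ret y k) =>
        UnmatchedCall st.1 k ∧ Act.ret y k ∈ st.2 ∧
        st' = (st.1 ++ [Act.ret y k], st.2)
    | .lin k =>
        ∃ M x y, Act.call M x k ∈ st.1 ∧ UnmatchedCall st.1 k ∧ ¬ IdOccurs k st.2 ∧
          st' = (st.1, st.2 ++ [Act.call M x k, Act.ret y k]) ∧
          st.2 ++ [Act.call M x k, Act.ret y k] ∈ Seq

/-- The atomic object `O(Seq)` as an LTS over pairs (history, linearization). -/
def AtomicObject (Seq : Set History) : LTS (History × History) ALabel :=
  ⟨([], []), AtomicTr Seq⟩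

/-- Reachable states of an LTS. -/
inductive Reachable {S L : Type*} (O : LTS S L) : S → Prop
  | init : Reachable O O.init
  | step {s a s'} : Reachable O s → O.tr s a s' → Reachable O s'


/-! ### Auxiliary machinery -/

open List

section Aux

lemma get?_append_length' {α : Type*} (l1 : List α) (a : α) (l2 : List α) :
    (l1 ++ a :: l2)[l1.length]? = some a := by
  induction l1 with
  | nil => rfl
  | cons c t ih => simpa using ih

lemma sublist_of_precedes {l : History} {a b : Act} (h : Precedes l a b) :
    [a, b] <+ l := by
  obtain ⟨i, j, hij, ha, hb⟩ := h
  have hi : i < l.length := (List.getElem?_eq_some_iff.mp ha).1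
  have hd : l.drop i = a :: l.drop (i+1) := by
    rw [List.drop_eq_getElem_cons hi]
    congr 1
    simpa [List.getElem?_eq_getElem hi] using ha
  have hbmem : b ∈ l.drop (i+1) := by
    apply List.mem_of_getElem? (i := j - (i+1))
    rw [List.getElem?_drop]
    rwa [Nat.add_sub_cancel' (by omega)]
  have h1 : [a, b] <+ a :: l.drop (i+1) :=
    List.Sublist.cons₂ a (List.singleton_sublist.mpr hbmem)
  calc [a,b] <+ a :: l.drop (i+1) := h1
    _ = l.drop i := hd.symm
    _ <+ l := List.drop_sublist i l

lemma pair_sublist_split {l : History} {a b : Act} (h : [a, b] <+ l) :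
    ∃ l1 l2 l3, l = l1 ++ a :: l2 ++ b :: l3 := by
  induction l with
  | nil => simp at h
  | cons c t ih =>
    cases h with
    | cons _ h' =>
      obtain ⟨l1, l2, l3, rfl⟩ := ih h'
      exact ⟨c :: l1, l2, l3, rfl⟩
    | cons_cons _ h' =>
      obtain ⟨l2, l3, rfl⟩ := List.append_of_mem (List.singleton_sublist.mp h')
      exact ⟨[], l2, l3, rfl⟩

lemma precedes_of_sublist {l : History} {a b : Act} (h : [a, b] <+ l) :
    Precedes l a b := by
  obtain ⟨l1, l2, l3, rfl⟩ := pair_sublist_split h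
  refine ⟨l1.length, l1.length + l2.length + 1, by omega, ?_, ?_⟩
  · simpa using get?_append_length' l1 a (l2 ++ b :: l3)
  · have he : l1 ++ a :: l2 ++ b :: l3 = (l1 ++ a :: l2) ++ b :: l3 := by simp
    have hl : (l1 ++ a :: l2).length = l1.length + l2.length + 1 := by
      simp; omega
    rw [he, ← hl]
    exact get?_append_length' _ b l3

lemma precedes_iff_sublist {l : History} {a b : Act} :
    Precedes l a b ↔ [a, b] <+ l :=
  ⟨sublist_of_precedes, precedes_of_sublist⟩

lemma two_le_countP {l : History} {p : Act → Bool} {a b : Act}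
    (ha : a ∈ l) (hb : b ∈ l) (hab : a ≠ b) (hpa : p a) (hpb : p b) :
    2 ≤ l.countP p := by
  obtain ⟨s, t, rfl⟩ := List.append_of_mem ha
  have hb' : b ∈ s ∨ b ∈ t := by
    rcases List.mem_append.mp hb with h | h
    · exact Or.inl h
    · rcases List.mem_cons.mp h with h | h
      · exact absurd h.symm hab
      · exact Or.inr h
  rw [List.countP_append, List.countP_cons_of_pos hpa]
  rcases hb' with h | h
  · have : 0 < s.countP p := List.countP_pos_iff.mpr ⟨b, h, hpb⟩
    omega
  · have : 0 < t.countP p := List.countP_pos_iff.mpr ⟨b, h, hpb⟩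
    omega

lemma pair_eq_append {a b : Act} {u v : List Act} (h : [a, b] = u ++ v) :
    (u = [] ∧ v = [a, b]) ∨ (u = [a] ∧ v = [b]) ∨ (u = [a, b] ∧ v = []) := by
  rcases u with _ | ⟨x, _ | ⟨y, _ | ⟨z, u⟩⟩⟩ <;> simp_all

/-- Boolean test for being a call. -/
def Act.isCallB : Act → Bool | .call _ _ _ => true | _ => false
/-- Boolean test for being a return. -/
def Act.isRetB : Act → Bool | .ret _ _ => true | _ => false

/-- Number of call actions with identifier `k`. -/
def cct (k : ℕ) (l : History) : ℕ := l.countP (fun a => a.isCallB && (a.id == k))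
/-- Number of return actions with identifier `k`. -/
def rct (k : ℕ) (l : History) : ℕ := l.countP (fun a => a.isRetB && (a.id == k))

lemma cct_eq_zero {k : ℕ} {l : History} (h : ¬ IdOccurs k l) : cct k l = 0 := by
  apply List.countP_eq_zero.mpr
  intro a ha hc
  simp only [Bool.and_eq_true, beq_iff_eq] at hc
  exact h ⟨a, ha, hc.2⟩

lemma rct_eq_zero {k : ℕ} {l : History} (h : ∀ y, Act.ret y k ∉ l) : rct k l = 0 := by
  apply List.countP_eq_zero.mpr
  intro a ha hc
  simp only [Bool.and_eq_true, beq_iff_eq] at hc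
  cases a with
  | call M x k' => simp [Act.isRetB] at hc
  | ret y k' =>
    have : k' = k := hc.2
    subst this
    exact h y ha

lemma count_call_le {M x k : ℕ} (l : History) :
    l.count (Act.call M x k) ≤ cct k l := by
  rw [List.count_eq_countP]
  apply List.countP_mono_left
  intro a _ hpa
  have : a = Act.call M x k := by simpa using hpa
  subst this
  simp [Act.isCallB, Act.id]

lemma count_ret_le {y k : ℕ} (l : History) :
    l.count (Act.ret y k) ≤ rct k l := by
  rw [List.count_eq_countP]
  apply List.countP_mono_left
  intro a _ hpa
  have : a = Act.ret y k := by simpa using hpa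
  subst this
  simp [Act.isRetB, Act.id]

lemma count_call_eq_one {M x k : ℕ} {l : History} (hb : cct k l ≤ 1)
    (hm : Act.call M x k ∈ l) : l.count (Act.call M x k) = 1 :=
  le_antisymm (le_trans (count_call_le l) hb) (List.count_pos_iff.mpr hm)

lemma count_ret_eq_one {y k : ℕ} {l : History} (hb : rct k l ≤ 1)
    (hm : Act.ret y k ∈ l) : l.count (Act.ret y k) = 1 :=
  le_antisymm (le_trans (count_ret_le l) hb) (List.count_pos_iff.mpr hm)

lemma call_uniq {M x M' x' k : ℕ} {l : History} (hb : cct k l ≤ 1)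
    (h1 : Act.call M x k ∈ l) (h2 : Act.call M' x' k ∈ l) : M = M' ∧ x = x' := by
  by_contra hne
  have hab : (Act.call M x k) ≠ Act.call M' x' k := by
    intro he
    injection he with h1 h2 h3
    exact hne ⟨h1, h2⟩
  have h2le : 2 ≤ l.countP (fun a => a.isCallB && (a.id == k)) :=
    two_le_countP h1 h2 hab (by simp [Act.isCallB, Act.id]) (by simp [Act.isCallB, Act.id])
  simp only [cct] at hb
  omega

lemma ret_uniq {y y' k : ℕ} {l : History} (hb : rct k l ≤ 1)
    (h1 : Act.ret y k ∈ l) (h2 : Act.ret y' k ∈ l) : y = y' := by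
  by_contra hne
  have hab : (Act.ret y k) ≠ Act.ret y' k := by
    intro he; injection he with h1 h2; exact hne h1
  have h2le : 2 ≤ l.countP (fun a => a.isRetB && (a.id == k)) :=
    two_le_countP h1 h2 hab (by simp [Act.isRetB, Act.id]) (by simp [Act.isRetB, Act.id])
  simp only [rct] at hb
  omega


lemma cct_append (k : ℕ) (l : History) (a : Act) :
    cct k (l ++ [a]) = cct k l + (if a.isCallB && (a.id == k) then 1 else 0) := by
  simp [cct, List.countP_append, List.countP_singleton]

lemma rct_append (k : ℕ) (l : History) (a : Act) :
    rct k (l ++ [a]) = rct k l + (if a.isRetB && (a.id == k) then 1 else 0) := by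
  simp [rct, List.countP_append, List.countP_singleton]

lemma cct_pair (k M0 x0 k0 y0 : ℕ) :
    cct k [Act.call M0 x0 k0, Act.ret y0 k0] = if k0 = k then 1 else 0 := by
  by_cases hk : k0 = k <;>
    simp [cct, List.countP_cons, Act.isCallB, Act.isRetB, Act.id, hk]

lemma rct_pair (k M0 x0 k0 y0 : ℕ) :
    rct k [Act.call M0 x0 k0, Act.ret y0 k0] = if k0 = k then 1 else 0 := by
  by_cases hk : k0 = k <;>
    simp [rct, List.countP_cons, Act.isCallB, Act.isRetB, Act.id, hk]

lemma cct_append_pair (k M0 x0 k0 y0 : ℕ) (l : History) :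
    cct k (l ++ [Act.call M0 x0 k0, Act.ret y0 k0]) =
      cct k l + (if k0 = k then 1 else 0) := by
  rw [cct, List.countP_append, ← cct, ← cct, cct_pair]

lemma rct_append_pair (k M0 x0 k0 y0 : ℕ) (l : History) :
    rct k (l ++ [Act.call M0 x0 k0, Act.ret y0 k0]) =
      rct k l + (if k0 = k then 1 else 0) := by
  rw [rct, List.countP_append, ← rct, ← rct, rct_pair]

/-- The inductive invariant for reachable states `(h, hs)` of the atomic object. -/
structure AInv (h hs : History) : Prop where
  ch : ∀ k, cct k h ≤ 1
  rh : ∀ k, rct k h ≤ 1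
  cs : ∀ k, cct k hs ≤ 1
  rs : ∀ k, rct k hs ≤ 1
  sc : ∀ M x k, Act.call M x k ∈ hs → Act.call M x k ∈ h
  rsI : ∀ y k, Act.ret y k ∈ h → Act.ret y k ∈ hs
  scr : ∀ M x k, Act.call M x k ∈ hs → ∃ y, Act.ret y k ∈ hs
  src : ∀ y k, Act.ret y k ∈ hs → ∃ M x, Act.call M x k ∈ hs
  ord : ∀ y k M x k', Precedes h (Act.ret y k) (Act.call M x k') →
        Act.call M x k' ∈ hs → Precedes hs (Act.ret y k) (Act.call M x k')

/-- If some action with identifier `k` occurs in `hs` and `h` contains the call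
`call M x k`, then that very call occurs in `hs`. -/
lemma call_mem_hs {h hs : History} (I : AInv h hs) {M x k : ℕ}
    (hm : Act.call M x k ∈ h) (hocc : IdOccurs k hs) : Act.call M x k ∈ hs := by
  obtain ⟨b, hb, hid⟩ := hocc
  have hcall : ∃ M' x', Act.call M' x' k ∈ hs := by
    cases b with
    | call M' x' k' =>
      have : k' = k := hid
      subst this; exact ⟨M', x', hb⟩
    | ret y k' =>
      have : k' = k := hid
      subst this
      exact I.src y _ hb
  obtain ⟨M', x', hb'⟩ := hcall
  obtain ⟨hM, hx⟩ := call_uniq (I.ch k) hm (I.sc M' x' k hb')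
  rw [hM, hx]
  exact hb'

lemma matched_call_mem_hs {h hs : History} (I : AInv h hs) {M x k y : ℕ}
    (hm : Act.call M x k ∈ h) (hy : Act.ret y k ∈ h) : Act.call M x k ∈ hs := by
  have h1 := I.rsI y k hy
  exact call_mem_hs I hm ⟨_, h1, rfl⟩

end Aux

section Steps

lemma inv_init : AInv [] [] := by
  refine ⟨?_, ?_, ?_, ?_, ?_, ?_, ?_, ?_, ?_⟩ <;>
    simp [cct, rct, Precedes]

lemma inv_step {Seq : Set History} {st st' : History × History} {l : ALabel}
    (I : AInv st.1 st.2) (htr : AtomicTr Seq st l st') : AInv st'.1 st'.2 := by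
  obtain ⟨h, hs⟩ := st
  obtain ⟨h', hs'⟩ := st'
  cases l with
  | act a =>
    cases a with
    | call M0 x0 k0 =>
      obtain ⟨hfresh, hst⟩ := htr
      simp only at hfresh hst ⊢
      rw [Prod.mk.injEq] at hst
      rw [hst.1, hst.2]
      refine ⟨?_, ?_, ?_, ?_, ?_, ?_, ?_, ?_, ?_⟩
      · intro k
        rw [cct_append]
        by_cases hk : k = k0
        · subst hk; rw [cct_eq_zero hfresh]; simp [Act.isCallB, Act.id]
        · simpa [Act.isCallB, Act.id, Ne.symm hk] using I.ch k
      · intro k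
        rw [rct_append]
        simpa [Act.isRetB] using I.rh k
      · exact I.cs
      · exact I.rs
      · exact fun M x k hm => List.mem_append_left _ (I.sc M x k hm)
      · intro y k hm
        rcases List.mem_append.mp hm with h1 | h1
        · exact I.rsI y k h1
        · simp at h1
      · exact I.scr
      · exact I.src
      · intro y k M x k' hp hmem
        rw [precedes_iff_sublist] at hp
        rcases List.sublist_append_iff.mp hp with ⟨u, v, huv, hu, hv⟩
        rcases pair_eq_append huv with ⟨rfl, rfl⟩ | ⟨rfl, rfl⟩ | ⟨rfl, rfl⟩
        · have := hv.length_le; simp at this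
        · rcases List.sublist_singleton.mp hv with h1 | h1
          · simp at h1
          · have he : Act.call M x k' = Act.call M0 x0 k0 := by simpa using h1
            injection he with e1 e2 e3
            subst e3
            exact absurd ⟨_, I.sc M x k' hmem, rfl⟩ hfresh
        · simpa using I.ord y k M x k' (precedes_of_sublist (by simpa using hu)) hmem
    | ret y0 k0 =>
      obtain ⟨hunm, hmemhs, hst⟩ := htr
      simp only at hunm hmemhs hst ⊢
      rw [Prod.mk.injEq] at hst
      rw [hst.1, hst.2]
      refine ⟨?_, ?_, ?_, ?_, ?_, ?_, ?_, ?_, ?_⟩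
      · intro k
        rw [cct_append]
        simpa [Act.isCallB] using I.ch k
      · intro k
        rw [rct_append]
        by_cases hk : k = k0
        · subst hk; rw [rct_eq_zero hunm.2]; simp [Act.isRetB, Act.id]
        · simpa [Act.isRetB, Act.id, Ne.symm hk] using I.rh k
      · exact I.cs
      · exact I.rs
      · intro M x k hm
        exact List.mem_append_left _ (I.sc M x k hm)
      · intro y k hm
        rcases List.mem_append.mp hm with h1 | h1
        · exact I.rsI y k h1
        · have he : Act.ret y k = Act.ret y0 k0 := by simpa using h1
          injection he with e1 e2
          subst e1; subst e2
          exact hmemhs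
      · exact I.scr
      · exact I.src
      · intro y k M x k' hp hmem
        rw [precedes_iff_sublist] at hp
        rcases List.sublist_append_iff.mp hp with ⟨u, v, huv, hu, hv⟩
        rcases pair_eq_append huv with ⟨rfl, rfl⟩ | ⟨rfl, rfl⟩ | ⟨rfl, rfl⟩
        · have := hv.length_le; simp at this
        · rcases List.sublist_singleton.mp hv with h1 | h1 <;> simp at h1
        · simpa using I.ord y k M x k' (precedes_of_sublist (by simpa using hu)) hmem
  | lin k0 =>
    obtain ⟨M0, x0, y0, hc, hunm, hnocc, hst, _⟩ := htr
    simp only at hc hunm hnocc hst ⊢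
    rw [Prod.mk.injEq] at hst
    rw [hst.1, hst.2]
    refine ⟨?_, ?_, ?_, ?_, ?_, ?_, ?_, ?_, ?_⟩
    · exact I.ch
    · exact I.rh
    · intro k
      rw [cct_append_pair]
      by_cases hk : k0 = k
      · subst hk; rw [cct_eq_zero hnocc]; simp
      · simpa [hk] using I.cs k
    · intro k
      rw [rct_append_pair]
      by_cases hk : k0 = k
      · subst hk; rw [rct_eq_zero (fun y hy => hnocc ⟨_, hy, rfl⟩)]; simp
      · simpa [hk] using I.rs k
    · intro M x k hm
      rcases List.mem_append.mp hm with h1 | h1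
      · exact I.sc M x k h1
      · rcases List.mem_cons.mp h1 with h2 | h2
        · injection h2 with e1 e2 e3
          subst e1; subst e2; subst e3
          exact hc
        · simp at h2
    · intro y k hm
      exact List.mem_append_left _ (I.rsI y k hm)
    · intro M x k hm
      rcases List.mem_append.mp hm with h1 | h1
      · obtain ⟨y, hy⟩ := I.scr M x k h1
        exact ⟨y, List.mem_append_left _ hy⟩
      · rcases List.mem_cons.mp h1 with h2 | h2
        · injection h2 with e1 e2 e3
          subst e3
          exact ⟨y0, List.mem_append_right _ (by simp)⟩
        · simp at h2
    · intro y k hm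
      rcases List.mem_append.mp hm with h1 | h1
      · obtain ⟨M, x, hy⟩ := I.src y k h1
        exact ⟨M, x, List.mem_append_left _ hy⟩
      · rcases List.mem_cons.mp h1 with h2 | h2
        · simp at h2
        · have he : Act.ret y k = Act.ret y0 k0 := by simpa using h2
          injection he with e1 e2
          subst e2
          exact ⟨M0, x0, List.mem_append_right _ (by simp)⟩
    · intro y k M x k' hp hmem
      rcases List.mem_append.mp hmem with h1 | h1
      · have := I.ord y k M x k' hp h1
        rw [precedes_iff_sublist] at this ⊢
        exact this.trans (List.sublist_append_left _ _)
      · rcases List.mem_cons.mp h1 with h2 | h2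
        · injection h2 with e1 e2 e3
          subst e1; subst e2; subst e3
          have hrmem : Act.ret y k ∈ h := by
            have hsub := sublist_of_precedes hp
            exact hsub.subset (by simp)
          have hrhs := I.rsI y k hrmem
          rw [precedes_iff_sublist]
          show [Act.ret y k] ++ [Act.call M x k'] <+
            hs ++ [Act.call M x k', Act.ret y0 k']
          exact List.Sublist.append (List.singleton_sublist.mpr hrhs)
            (List.singleton_sublist.mpr (by simp))
        · simp at h2

end Steps


section Final

lemma inv_of_reachable {Seq : Set History} {s : History × History}
    (hr : Reachable (AtomicObject Seq) s) : AInv s.1 s.2 := by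
  induction hr with
  | init => exact inv_init
  | step _ htr ih => exact inv_step ih htr

lemma inv_linearizes {h hs : History} (I : AInv h hs) : Linearizes h hs := by
  classical
  set K : Set ℕ := {k | UnmatchedCall h k ∧ IdOccurs k hs} with hKdef
  have hKmem : ∀ k, k ∈ K ↔ UnmatchedCall h k ∧ IdOccurs k hs := fun k => Iff.rfl
  set q : Act → Bool := fun a => a.isRetB && decide (UnmatchedCall h a.id) with hqdef
  have hqa : ∀ a, q a = true ↔ (a.isRetB = true ∧ UnmatchedCall h a.id) := by
    intro a; simp [hqdef]
  set pd : Act → Bool :=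
    fun a => decide (¬ (a.isCall ∧ UnmatchedCall h a.id ∧ a.id ∉ K)) with hpdef
  have hpda : ∀ a, pd a = true ↔ ¬ (a.isCall ∧ UnmatchedCall h a.id ∧ a.id ∉ K) := by
    intro a; simp [hpdef]; tauto
  refine ⟨h.filter pd ++ hs.filter q, ⟨K, hs.filter q, ?_, ?_, ?_, ?_⟩, ?_, ?_⟩
  · exact fun k hk => ((hKmem k).mp hk).1
  · intro a ha
    obtain ⟨hahs, hqa'⟩ := List.mem_filter.mp ha
    have hq' := (hqa a).mp hqa'
    cases a with
    | call M x k => simp [Act.isRetB] at hq'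
    | ret y k =>
      exact ⟨y, k, rfl, (hKmem k).mpr ⟨hq'.2, ⟨_, hahs, rfl⟩⟩⟩
  · intro k hk
    obtain ⟨hunm, a, hahs, hid⟩ := (hKmem k).mp hk
    have hret : ∃ y, Act.ret y k ∈ hs := by
      cases a with
      | call M x k' =>
        have : k' = k := hid
        subst this
        exact I.scr M x _ hahs
      | ret y k' =>
        have : k' = k := hid
        subst this
        exact ⟨y, hahs⟩
    obtain ⟨y, hy⟩ := hret
    exact ⟨y, List.mem_filter.mpr ⟨hy, (hqa _).mpr ⟨rfl, hunm⟩⟩⟩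
  · exact congrArg (· ++ hs.filter q)
      (List.filter_congr (fun a _ => decide_eq_decide.mpr Iff.rfl))
  · -- permutation
    rw [List.perm_iff_count]
    intro a
    rw [List.count_append]
    cases a with
    | call M x k =>
      have hr0 : List.count (Act.call M x k) (hs.filter q) = 0 := by
        rw [List.count_eq_zero]
        intro hm
        have := (hqa _).mp (List.mem_filter.mp hm).2
        simp [Act.isRetB] at this
      rw [hr0, Nat.add_zero]
      by_cases hpcase : pd (Act.call M x k) = true
      · rw [List.count_filter hpcase]
        have hiff := (hpda _).mp hpcase
        simp only [Act.isCall, Act.id, true_and] at hiff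
        by_cases hmem : Act.call M x k ∈ hs
        · rw [count_call_eq_one (I.ch k) (I.sc M x k hmem),
            count_call_eq_one (I.cs k) hmem]
        · rw [List.count_eq_zero.mpr hmem, List.count_eq_zero]
          intro hmh
          apply hmem
          rcases not_and_or.mp hiff with hnu | hkK
          · rw [UnmatchedCall, not_and_or] at hnu
            rcases hnu with h1 | h1
            · exact absurd ⟨M, x, hmh⟩ h1
            · push_neg at h1
              obtain ⟨y, hy⟩ := h1
              exact matched_call_mem_hs I hmh hy
          · exact call_mem_hs I hmh ((hKmem k).mp (not_not.mp hkK)).2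
      · have hcond : UnmatchedCall h k ∧ k ∉ K := by
          have hx : (Act.call M x k).isCall ∧ UnmatchedCall h (Act.call M x k).id ∧
              (Act.call M x k).id ∉ K :=
            not_not.mp (fun hnx => hpcase ((hpda _).mpr hnx))
          exact ⟨hx.2.1, hx.2.2⟩
        have hnotin : Act.call M x k ∉ hs := by
          intro hm
          exact hcond.2 ((hKmem k).mpr ⟨hcond.1, ⟨_, hm, rfl⟩⟩)
        rw [List.count_eq_zero.mpr hnotin, List.count_eq_zero]
        intro hm
        exact hpcase (List.mem_filter.mp hm).2
    | ret y k =>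
      have hpt : pd (Act.ret y k) = true := (hpda _).mpr (by simp [Act.isCall])
      rw [List.count_filter hpt]
      by_cases hu : UnmatchedCall h k
      · have hq1 : q (Act.ret y k) = true := (hqa _).mpr ⟨rfl, hu⟩
        rw [List.count_filter hq1]
        rw [List.count_eq_zero.mpr (hu.2 y), Nat.zero_add]
      · have hq0 : Act.ret y k ∉ hs.filter q := fun hm =>
          hu (((hqa _).mp (List.mem_filter.mp hm).2).2)
        rw [List.count_eq_zero.mpr hq0, Nat.add_zero]
        by_cases hmh : Act.ret y k ∈ h
        · rw [count_ret_eq_one (I.rh k) hmh,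
            count_ret_eq_one (I.rs k) (I.rsI y k hmh)]
        · rw [List.count_eq_zero.mpr hmh]
          symm
          rw [List.count_eq_zero]
          intro hmhs
          obtain ⟨M, x, hcall⟩ := I.src y k hmhs
          have hch := I.sc M x k hcall
          rw [UnmatchedCall, not_and_or] at hu
          rcases hu with h1 | h1
          · exact h1 ⟨M, x, hch⟩
          · push_neg at h1
            obtain ⟨y', hy'⟩ := h1
            have hy's : Act.ret y' k ∈ hs := I.rsI y' k hy'
            have he := ret_uniq (I.rs k) hmhs hy's
            subst he
            exact hmh hy'
  · -- order preservation
    intro r c hrret hccall hp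
    cases r with
    | call M x k => exact absurd hrret (by simp [Act.isRet])
    | ret y k =>
      cases c with
      | ret y' k'' => exact absurd hccall (by simp [Act.isCall])
      | call M x k' =>
        rw [precedes_iff_sublist] at hp
        rcases List.sublist_append_iff.mp hp with ⟨u, v, huv, hu, hv⟩
        have hvcall : Act.call M x k' ∈ v → False := by
          intro hcm
          have := (hqa _).mp (List.mem_filter.mp (hv.subset hcm)).2
          simp [Act.isRetB] at this
        rcases pair_eq_append huv with ⟨rfl, rfl⟩ | ⟨rfl, rfl⟩ | ⟨rfl, rfl⟩
        · exact absurd (by simp) (fun hh => hvcall hh)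
        · exact absurd (by simp) (fun hh => hvcall hh)
        · have hu' : [Act.ret y k, Act.call M x k'] <+ h.filter pd := by
            simpa using hu
          have hsubh : [Act.ret y k, Act.call M x k'] <+ h :=
            hu'.trans List.filter_sublist
          have hcmem : Act.call M x k' ∈ h.filter pd := hu'.subset (by simp)
          have hcnd := (hpda _).mp (List.mem_filter.mp hcmem).2
          simp only [Act.isCall, Act.id, true_and] at hcnd
          have hch : Act.call M x k' ∈ h := (List.mem_filter.mp hcmem).1
          have hcs : Act.call M x k' ∈ hs := by
            rcases not_and_or.mp hcnd with h1 | h1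
            · rw [UnmatchedCall, not_and_or] at h1
              rcases h1 with h2 | h2
              · exact absurd ⟨M, x, hch⟩ h2
              · push_neg at h2
                obtain ⟨y', hy'⟩ := h2
                exact matched_call_mem_hs I hch hy'
            · exact call_mem_hs I hch ((hKmem k').mp (not_not.mp h1)).2
          exact I.ord y k M x k' (precedes_of_sublist hsubh) hcs

end Final

/-- In every reachable state `(h, hs)` of the atomic object `O(Seq)`,
the component `hs` is a linearization of the history `h`: some completion of `h`
(appending matching returns for some unmatched calls and deleting the remaining
unmatched calls) is a permutation of `hs` preserving the order between each return
action and each later call action. -/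
theorem atomic_reachable_linearizes (Seq : Set History)
    (h hs : History) (hr : Reachable (AtomicObject Seq) (h, hs)) :
    Linearizes h hs :=
  inv_linearizes (inv_of_reachable hr)
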